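/- Let ℓ and ℓ' be distinct prime numbers and let α, β be nonzero algebraic numbers such that α/β is a root of unity which is congruent to 1 modulo some prime above ℓ and congruent to 1 modulo some prime above ℓ'. Then α = β. -/
import Mathlib


open NumberField

set_option synthInstance.maxHeartbeats 400000 in
/-- If `v ^ m = 1` with `ℓ ∤ m`, and `v ≡ 1` modulo a maximal ideal `P` containing `ℓ`
(`ℓ` prime), then `v = 1`. -/
lemma aux_stmt_14 (K : Type*) [Field K] [NumberField K] (ℓ m : ℕ) (hℓ : ℓ.Prime)
    (v : 𝓞 K) (hm : 1 ≤ m) (hcop : ¬ ℓ ∣ m) (hv : v ^ m = 1)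
    (P : Ideal (𝓞 K)) (hPmax : P.IsMaximal) (hℓP : (ℓ : 𝓞 K) ∈ P)
    (hvP : v - 1 ∈ P) : v = 1 := by
  by_contra hne
  have hS : (∑ i ∈ Finset.range m, v ^ i) = 0 := by
    have h := geom_sum_mul v m
    rw [hv, sub_self] at h
    rcases mul_eq_zero.1 h with h1 | h2
    · exact h1
    · exact absurd (sub_eq_zero.1 h2) hne
  have hfv : Ideal.Quotient.mk P v = 1 := by
    have := Ideal.Quotient.eq.2 hvP
    simpa using this
  have hmP : (m : 𝓞 K) ∈ P := by
    rw [← Ideal.Quotient.eq_zero_iff_mem]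
    have : Ideal.Quotient.mk P (∑ i ∈ Finset.range m, v ^ i) = 0 := by
      rw [hS, map_zero]
    rw [map_sum] at this
    simp only [map_pow, hfv, one_pow] at this
    simpa using this
  have hcoprime : IsCoprime (ℓ : ℤ) (m : ℤ) :=
    Int.isCoprime_iff_gcd_eq_one.2 (by
      simpa [Int.gcd_natCast_natCast] using (hℓ.coprime_iff_not_dvd.2 hcop))
  obtain ⟨x, y, hxy⟩ := hcoprime
  have h1 : (1 : 𝓞 K) ∈ P := by
    have := congrArg (algebraMap ℤ (𝓞 K)) hxy
    push_cast at this
    rw [← this]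
    exact P.add_mem (P.mul_mem_left _ hℓP) (P.mul_mem_left _ hmP)
  exact hPmax.ne_top (Ideal.eq_top_iff_one P |>.2 h1)

/-- Let `ℓ ≠ ℓ'` be prime numbers and `α, β` nonzero elements of a number field `K` such that
`α/β` is a root of unity which is congruent to `1` modulo some prime of `K` above `ℓ` and
congruent to `1` modulo some prime of `K` above `ℓ'`.  Then `α = β`. -/
theorem stmt_14 (K : Type*) [Field K] [NumberField K] (ℓ ℓ' : ℕ)
    (hℓ : ℓ.Prime) (hℓ' : ℓ'.Prime) (hne : ℓ ≠ ℓ')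
    (α β : K) (hα : α ≠ 0) (hβ : β ≠ 0)
    (u : 𝓞 K) (hu : (u : K) = α / β)
    (hroot : ∃ m : ℕ, 1 ≤ m ∧ u ^ m = 1)
    (hP : ∃ P : Ideal (𝓞 K), P.IsMaximal ∧ (ℓ : 𝓞 K) ∈ P ∧ u - 1 ∈ P)
    (hP' : ∃ P' : Ideal (𝓞 K), P'.IsMaximal ∧ (ℓ' : 𝓞 K) ∈ P' ∧ u - 1 ∈ P') :
    α = β := by
  obtain ⟨m, hm, hum⟩ := hroot
  obtain ⟨P, hPmax, hℓP, huP⟩ := hP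
  obtain ⟨P', hPmax', hℓP', huP'⟩ := hP'
  have hm0 : m ≠ 0 := by omega
  set a := m.factorization ℓ with ha
  set m' := m / ℓ ^ a with hm'
  have hsplit : ℓ ^ a * m' = m := Nat.ordProj_mul_ordCompl_eq_self m ℓ
  have hm'pos : 1 ≤ m' := Nat.ordCompl_pos ℓ hm0
  have hnd : ¬ ℓ ∣ m' := Nat.not_dvd_ordCompl hℓ hm0
  -- v = u ^ (ℓ ^ a)
  set v : 𝓞 K := u ^ (ℓ ^ a) with hv
  have hvm : v ^ m' = 1 := by rw [hv, ← pow_mul, hsplit, hum]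
  have hvP : v - 1 ∈ P := by
    rw [← Ideal.Quotient.eq]
    have hfu : Ideal.Quotient.mk P u = 1 := by
      have := Ideal.Quotient.eq.2 huP
      simpa using this
    rw [hv, map_pow, hfu, one_pow, map_one]
  have hv1 : v = 1 := aux_stmt_14 K ℓ m' hℓ v hm'pos hnd hvm P hPmax hℓP hvP
  -- Now u ^ (ℓ ^ a) = 1, use P' with ℓ' ∤ ℓ ^ a
  have hnd' : ¬ ℓ' ∣ ℓ ^ a := by
    intro h
    exact hne ((Nat.prime_dvd_prime_iff_eq hℓ' hℓ).1 (hℓ'.dvd_of_dvd_pow h)).symm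
  have hu1 : u = 1 :=
    aux_stmt_14 K ℓ' (ℓ ^ a) hℓ' u (Nat.one_le_iff_ne_zero.2 (pow_ne_zero a hℓ.ne_zero))
      hnd' (by rw [← hv, hv1]) P' hPmax' hℓP' huP'
  have : α / β = 1 := by rw [← hu, hu1]; simp
  exact (div_eq_one_iff_eq hβ).1 this
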